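/- For a semisimple Lie algebra with simple roots α_i and ℓ=2p divisible by all (α_i,α_i), the index of Λ^⊕ = √p Λ_R^∨ in its dual lattice (1/√p)Λ_W equals |Λ_W/Λ_R| · ∏_i (ℓ/(α_i,α_i)). -/

import Mathlib

open scoped RealInnerProductSpace

lemma mem_closure_range_iff' {V : Type*} [AddCommGroup V] {ι : Type*} [Fintype ι]
    (h : ι → V) (x : V) :
    x ∈ AddSubgroup.closure (Set.range h) ↔ ∃ v : ι → ℤ, ∑ i, v i • h i = x := by
  rw [← Submodule.span_int_eq_addSubgroupClosure, Submodule.mem_toAddSubgroup,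
    Submodule.mem_span_range_iff_exists_fun]

lemma index_dvd_subgroup' {ι : Type*} [Fintype ι] (m : ι → ℕ) (hm : ∀ i, 0 < m i)
    (P : AddSubgroup (ι → ℤ)) (hP : ∀ v, v ∈ P ↔ ∀ i, (m i : ℤ) ∣ v i) :
    P.index = ∏ i, m i := by
  haveI : ∀ i, NeZero (m i) := fun i => ⟨(hm i).ne'⟩
  let q : (ι → ℤ) →+ ∀ i, ZMod (m i) :=
    AddMonoidHom.mk' (fun v i => (v i : ZMod (m i))) (by intro a b; funext i; simp [Pi.add_apply])
  have hker : q.ker = P := by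
    ext v
    simp [q, AddMonoidHom.mem_ker, funext_iff, hP, ZMod.intCast_zmod_eq_zero_iff_dvd]
  have hsurj : Function.Surjective q := by
    intro w
    refine ⟨fun i => ((w i).val : ℤ), ?_⟩
    funext i
    simp [q, ZMod.intCast_cast]
  rw [← hker, AddSubgroup.index_ker]
  have : Nat.card q.range = Nat.card (∀ i, ZMod (m i)) :=
    Nat.card_congr (Equiv.subtypeUnivEquiv
      (fun x => AddMonoidHom.range_eq_top.mpr hsurj ▸ AddSubgroup.mem_top x))
  rw [this, Nat.card_pi]
  exact Finset.prod_congr rfl fun i _ => Nat.card_zmod (m i)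

theorem stmt_5 {V : Type*} [NormedAddCommGroup V] [InnerProductSpace ℝ V]
    {ι : Type*} [Fintype ι] (α : ι → V) (p : ℕ) (hp : 0 < p)
    (c : ι → ℕ) (hcpos : ∀ i, 0 < c i) (hc : ∀ i, ⟪α i, α i⟫ = c i)
    (hdvd : ∀ i, c i ∣ 2 * p)
    (hint : ∀ i j, ∃ n : ℤ, ⟪α i, α j⟫ = n)
    (hcartan : ∀ i j, ∃ a : ℤ, 2 * ⟪α i, α j⟫ = a * ⟪α i, α i⟫)
    (hlin : LinearIndependent ℝ α)
    (hspan : Submodule.span ℝ (Set.range α) = ⊤)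
    (W R L D : AddSubgroup V)
    (hR : R = AddSubgroup.closure (Set.range α))
    (hW : ∀ x, x ∈ W ↔ ∀ i, ∃ n : ℤ, ⟪x, (2 / ⟪α i, α i⟫) • α i⟫ = n)
    (hL : L = AddSubgroup.closure
        (Set.range fun i => Real.sqrt p • ((2 / ⟪α i, α i⟫) • α i)))
    (hD : ∀ x, x ∈ D ↔ ∀ y ∈ L, ∃ n : ℤ, ⟪x, y⟫ = n) :
    (L.addSubgroupOf D).index = (R.addSubgroupOf W).index * ∏ i, (2 * p / c i) := by
  classical
  have hc0 : ∀ i, ⟪α i, α i⟫ ≠ 0 := fun i => by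
    rw [hc i]; exact_mod_cast (hcpos i).ne'
  set s : ℝ := Real.sqrt p with hs
  have hs0 : (0:ℝ) < s := Real.sqrt_pos.mpr (by exact_mod_cast hp)
  have hsne : s ≠ 0 := hs0.ne'
  have hss : s * s = (p : ℝ) := Real.mul_self_sqrt (by positivity)
  set m : ι → ℕ := fun i => 2 * p / c i with hmdef
  have hmc : ∀ i, c i * m i = 2 * p := fun i => Nat.mul_div_cancel' (hdvd i)
  have hmpos : ∀ i, 0 < m i :=
    fun i => Nat.div_pos (Nat.le_of_dvd (by omega) (hdvd i)) (hcpos i)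
  have hmR : ∀ i, (m i : ℝ) * (c i : ℝ) = 2 * p := by
    intro i
    rw [← Nat.cast_mul]
    rw [mul_comm (m i) (c i), hmc i]
    push_cast
    ring
  -- key scaling identity
  have hkey : ∀ i, s • s • ((2 / ⟪α i, α i⟫) • α i) = (m i : ℤ) • α i := by
    intro i
    rw [smul_smul, hss, smul_smul, ← Int.cast_smul_eq_zsmul ℝ]
    congr 1
    rw [hc i]
    push_cast
    have hci : (c i : ℝ) ≠ 0 := by exact_mod_cast (hcpos i).ne'
    field_simp
    rw [mul_comm] at *
    nlinarith [hmR i]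
  set M : AddSubgroup V := AddSubgroup.closure (Set.range fun i => (m i : ℤ) • α i) with hM
  have hmemL : ∀ x, x ∈ L ↔
      ∃ v : ι → ℤ, ∑ i, v i • (s • ((2 / ⟪α i, α i⟫) • α i)) = x := by
    intro x; rw [hL]; exact mem_closure_range_iff' _ x
  have hmemM : ∀ x, x ∈ M ↔ ∃ v : ι → ℤ, ∑ i, v i • ((m i : ℤ) • α i) = x :=
    fun x => mem_closure_range_iff' _ x
  have hmemR : ∀ x, x ∈ R ↔ ∃ v : ι → ℤ, ∑ i, v i • α i = x := by
    intro x; rw [hR]; exact mem_closure_range_iff' _ x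
  have hsum : ∀ v : ι → ℤ,
      s • ∑ i, v i • (s • ((2 / ⟪α i, α i⟫) • α i)) = ∑ i, v i • ((m i : ℤ) • α i) := by
    intro v
    rw [Finset.smul_sum]
    exact Finset.sum_congr rfl fun i _ => by rw [smul_comm, hkey i]
  have hsmulinj : Function.Injective (fun y : V => s • y) :=
    smul_right_injective V hsne
  -- the scaling equivalence
  let e : V ≃+ V := DistribMulAction.toAddEquiv₀ V s hsne
  have hex : ∀ x, e.toAddMonoidHom x = s • x := fun _ => rfl
  have hcomapM : M.comap e.toAddMonoidHom = L := by
    ext x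
    rw [AddSubgroup.mem_comap, hex, hmemM, hmemL]
    constructor
    · rintro ⟨v, hv⟩
      refine ⟨v, hsmulinj ?_⟩
      simpa only [hsum v] using hv
    · rintro ⟨v, hv⟩
      exact ⟨v, by rw [← hsum v, hv]⟩
  have hDW : D = W.comap e.toAddMonoidHom := by
    ext x
    rw [AddSubgroup.mem_comap, hD, hW, hex]
    constructor
    · intro h i
      obtain ⟨n, hn⟩ := h (s • ((2 / ⟪α i, α i⟫) • α i))
        (by rw [hL]; exact AddSubgroup.subset_closure (Set.mem_range_self i))
      refine ⟨n, ?_⟩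
      rw [real_inner_smul_left, ← real_inner_smul_right, hn]
    · intro h y hy
      obtain ⟨v, hv⟩ := (hmemL y).mp hy
      choose n hn using h
      refine ⟨∑ i, v i * n i, ?_⟩
      rw [← hv, inner_sum]
      push_cast
      refine Finset.sum_congr rfl fun i _ => ?_
      rw [← Int.cast_smul_eq_zsmul ℝ (v i), real_inner_smul_right,
        real_inner_smul_right, ← real_inner_smul_left, hn i]
  have hmapD : D.map e.toAddMonoidHom = W := by
    rw [hDW]
    exact AddSubgroup.map_comap_eq_self_of_surjective (f := e.toAddMonoidHom) e.surjective W
  have h1 : (L.addSubgroupOf D).index = M.relIndex W := by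
    have h := AddSubgroup.relIndex_comap (H := M) e.toAddMonoidHom D
    rw [hcomapM, hmapD] at h
    exact h
  have hMR : M ≤ R := by
    rw [hM, hR]
    refine (AddSubgroup.closure_le _).mpr ?_
    rintro _ ⟨i, rfl⟩
    exact AddSubgroup.zsmul_mem _ (AddSubgroup.subset_closure (Set.mem_range_self i)) _
  have hRW : R ≤ W := by
    rw [hR]
    refine (AddSubgroup.closure_le _).mpr ?_
    rintro _ ⟨j, rfl⟩
    rw [SetLike.mem_coe, hW]
    intro i
    obtain ⟨a, ha⟩ := hcartan i j
    refine ⟨a, ?_⟩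
    have hcomm := real_inner_comm (α i) (α j)
    rw [real_inner_smul_right, div_mul_eq_mul_div, div_eq_iff (hc0 i)]
    linarith [ha, hcomm]
  have h2 : M.relIndex R * R.relIndex W = M.relIndex W :=
    AddSubgroup.relIndex_mul_relIndex M R W hMR hRW
  -- compute M.relIndex R
  let f : (ι → ℤ) →+ V := AddMonoidHom.mk' (fun v => ∑ i, v i • α i) (by
    intro a b
    simp [add_zsmul, Finset.sum_add_distrib])
  have hfapp : ∀ v, f v = ∑ i, v i • α i := fun _ => rfl
  have hinj : Function.Injective f := by
    intro v w hvw
    have h0 : f (v - w) = 0 := by rw [map_sub, hvw, sub_self]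
    have hz : ∀ i, ((v - w) i : ℝ) = 0 := by
      refine Fintype.linearIndependent_iff.mp hlin (fun i => ((v - w) i : ℝ)) ?_
      rw [hfapp] at h0
      rw [← h0]
      exact Finset.sum_congr rfl fun i _ => Int.cast_smul_eq_zsmul ℝ _ _
    funext i
    have := hz i
    have : v i - w i = 0 := by exact_mod_cast this
    omega
  have hrange : f.range = R := by
    ext x
    rw [AddMonoidHom.mem_range, hmemR]
    simp only [hfapp]
  have hcomapf : ∀ v : ι → ℤ, v ∈ M.comap f ↔ ∀ i, (m i : ℤ) ∣ v i := by
    intro v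
    rw [AddSubgroup.mem_comap, hmemM]
    constructor
    · rintro ⟨w, hw⟩ i
      have heq : f (fun j => (m j : ℤ) * w j) = f v := by
        rw [hfapp, ← hw]
        exact Finset.sum_congr rfl fun j _ => by
          rw [smul_smul, mul_comm]
      have hv := hinj heq
      exact ⟨w i, by rw [← congrFun hv i]⟩
    · intro hdv
      choose w hw using hdv
      refine ⟨w, ?_⟩
      rw [hfapp]
      exact Finset.sum_congr rfl fun i _ => by
        rw [smul_smul, mul_comm, ← hw i]
  have h3 : M.relIndex R = ∏ i, m i := by
    have h4 := AddSubgroup.relIndex_comap (H := M) f (⊤ : AddSubgroup (ι → ℤ))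
    rw [AddSubgroup.relIndex_top_right, ← AddMonoidHom.range_eq_map, hrange] at h4
    rw [← h4]
    exact index_dvd_subgroup' m hmpos (M.comap f) hcomapf
  rw [h1, ← h2, h3]
  have : (R.addSubgroupOf W).index = R.relIndex W := rfl
  rw [this]
  ring
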